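/- Let A = (a_{ij}) be an n×n alternating sign matrix and B = (b_{ij}) the corresponding monotone triangle (b_{ij} is the column index of the j-th entry 1 in the vector of partial column sums of rows 1..i, shifted by j−1 so that rows are strictly increasing with gaps). Then the generalized inversion number of A equals that of B: ∑_{i < i', j' ≤ j} a_{ij} a_{i'j'} = #{(i,j) : 1 ≤ j ≤ i ≤ n−1, b_{i+1,j} ≤ b_{ij} = b_{i+1,j+1} − 1}. -/

import Mathlib

open Finset


lemma alt_seg_sum (n : ℕ) (f : ℕ → ℤ)
    (hent : ∀ k < n, f k = -1 ∨ f k = 0 ∨ f k = 1)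
    (halt : ∀ k k', k < k' → k' < n → f k ≠ 0 → f k' ≠ 0 →
      (∀ k'', k < k'' → k'' < k' → f k'' = 0) → f k = - f k')
    (lo : ℕ) : ∀ hi ≤ n, -1 ≤ ∑ k ∈ Finset.Ico lo hi, f k ∧ ∑ k ∈ Finset.Ico lo hi, f k ≤ 1 := by
  have main : ∀ hi ≤ n,
      ((∀ k, lo ≤ k → k < hi → f k = 0) ∧ ∑ k ∈ Finset.Ico lo hi, f k = 0) ∨
      (∃ m, lo ≤ m ∧ m < hi ∧ f m ≠ 0 ∧ (∀ k, m < k → k < hi → f k = 0) ∧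
        (∑ k ∈ Finset.Ico lo hi, f k = f m ∨ ∑ k ∈ Finset.Ico lo hi, f k = 0)) := by
    intro hi
    induction hi with
    | zero => intro _; left; simp
    | succ h ih =>
      intro hh
      have hhn : h < n := Nat.lt_of_succ_le hh
      by_cases hlo : h < lo
      · left
        constructor
        · intro k hk1 hk2; omega
        · rw [Finset.Ico_eq_empty (by omega)]; simp
      push_neg at hlo
      have hsum : ∑ k ∈ Finset.Ico lo (h+1), f k = (∑ k ∈ Finset.Ico lo h, f k) + f h :=
        Finset.sum_Ico_succ_top hlo _
      rcases ih (le_of_lt hhn) with ⟨hz, h0⟩ | ⟨m, hm1, hm2, hm3, hm4, hm5⟩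
      · by_cases hfh : f h = 0
        · left
          refine ⟨?_, by rw [hsum, h0, hfh]; ring⟩
          intro k hk1 hk2
          rcases Nat.lt_succ_iff_lt_or_eq.mp hk2 with h' | h'
          · exact hz k hk1 h'
          · subst h'; exact hfh
        · right
          exact ⟨h, hlo, Nat.lt_succ_self h, hfh, by intro k hk1 hk2; omega,
            Or.inl (by rw [hsum, h0]; ring)⟩
      · by_cases hfh : f h = 0
        · right
          refine ⟨m, hm1, Nat.lt_succ_of_lt hm2, hm3, ?_, ?_⟩
          · intro k hk1 hk2
            rcases Nat.lt_succ_iff_lt_or_eq.mp hk2 with h' | h'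
            · exact hm4 k hk1 h'
            · subst h'; exact hfh
          · rw [hsum, hfh]
            rcases hm5 with h' | h' <;> [left; right] <;> rw [h'] <;> ring
        · right
          have hne : f m = - f h := halt m h hm2 hhn hm3 hfh hm4
          refine ⟨h, hlo, Nat.lt_succ_self h, hfh, by intro k hk1 hk2; omega, ?_⟩
          rcases hm5 with h' | h'
          · right; rw [hsum, h', hne]; ring
          · left; rw [hsum, h']; ring
  intro hi hhi
  rcases main hi hhi with ⟨_, h0⟩ | ⟨m, _, hm2, _, _, hm5⟩
  · rw [h0]; constructor <;> norm_num
  · have := hent m (lt_of_lt_of_le hm2 hhi)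
    rcases hm5 with h' | h' <;> rw [h'] <;> omega

/-- prefix sums of an alternating line with total 1 are 0 or 1 -/
lemma alt_prefix01 (n : ℕ) (f : ℕ → ℤ)
    (hent : ∀ k < n, f k = -1 ∨ f k = 0 ∨ f k = 1)
    (htot : ∑ k ∈ Finset.range n, f k = 1)
    (halt : ∀ k k', k < k' → k' < n → f k ≠ 0 → f k' ≠ 0 →
      (∀ k'', k < k'' → k'' < k' → f k'' = 0) → f k = - f k')
    (i : ℕ) (hi : i < n) :
    ∑ k ∈ Finset.range (i+1), f k = 0 ∨ ∑ k ∈ Finset.range (i+1), f k = 1 := by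
  have h1 := alt_seg_sum n f hent halt 0 (i+1) hi
  have h2 := alt_seg_sum n f hent halt (i+1) n (le_refl n)
  have h3 : ∑ k ∈ Finset.Ico 0 (i+1), f k + ∑ k ∈ Finset.Ico (i+1) n, f k
      = ∑ k ∈ Finset.Ico 0 n, f k := Finset.sum_Ico_consecutive _ (by omega) (by omega)
  rw [← Finset.range_eq_Ico] at h3
  rw [← Finset.range_eq_Ico, htot] at h3
  have h4 : ∑ k ∈ Finset.range (i+1), f k = ∑ k ∈ Finset.Ico 0 (i+1), f k := by
    rw [Finset.range_eq_Ico]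
  omega

lemma count_iff (t : ℕ) (p : ℕ → ℤ) (hmp : ∀ j j', j < j' → j' < t → p j < p j')
    (j : ℕ) (hj : j < t) (m : ℤ) :
    j + 1 ≤ ((Finset.range t).filter (fun k => p k ≤ m)).card ↔ p j ≤ m := by
  constructor
  · intro h
    by_contra hc
    push_neg at hc
    have hsub : (Finset.range t).filter (fun k => p k ≤ m) ⊆ Finset.range j := by
      intro k hk
      simp only [Finset.mem_filter, Finset.mem_range] at hk ⊢
      by_contra hkj
      push_neg at hkj
      rcases eq_or_lt_of_le hkj with h' | h'
      · subst h'; omega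
      · exact absurd (lt_of_le_of_lt hk.2 hc) (not_lt.mpr (le_of_lt (hmp j k h' hk.1)))
    have := Finset.card_le_card hsub
    simp at this
    omega
  · intro h
    have hsub : Finset.range (j+1) ⊆ (Finset.range t).filter (fun k => p k ≤ m) := by
      intro k hk
      simp only [Finset.mem_range] at hk
      simp only [Finset.mem_filter, Finset.mem_range]
      refine ⟨by omega, ?_⟩
      rcases Nat.lt_succ_iff_lt_or_eq.mp hk with h' | h'
      · exact le_trans (le_of_lt (hmp k j h' hj)) h
      · subst h'; exact h
    have := Finset.card_le_card hsub
    simpa using this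

section
variable (n : ℕ) (a : ℕ → ℕ → ℤ) (b : ℕ → ℕ → ℤ)

/-- column prefix sums are 0 or 1 -/
lemma col01
    (entries : ∀ i j, i < n → j < n → a i j = -1 ∨ a i j = 0 ∨ a i j = 1)
    (colsum : ∀ j < n, ∑ i ∈ Finset.range n, a i j = 1)
    (colalt : ∀ j < n, ∀ i i', i < i' → i' < n → a i j ≠ 0 → a i' j ≠ 0 →
      (∀ i'', i < i'' → i'' < i' → a i'' j = 0) → a i j = - a i' j)
    (m : ℕ) (hm : m < n) (i : ℕ) (hi : i < n) :
    ∑ i' ∈ Finset.range (i+1), a i' m = 0 ∨ ∑ i' ∈ Finset.range (i+1), a i' m = 1 :=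
  alt_prefix01 n (fun i' => a i' m) (fun k hk => entries k m hk hm) (colsum m hm)
    (colalt m hm) i hi

/-- the i-th row sum of column prefix sums is i+1, as a filter card -/
lemma cardM
    (entries : ∀ i j, i < n → j < n → a i j = -1 ∨ a i j = 0 ∨ a i j = 1)
    (rowsum : ∀ i < n, ∑ j ∈ Finset.range n, a i j = 1)
    (colsum : ∀ j < n, ∑ i ∈ Finset.range n, a i j = 1)
    (colalt : ∀ j < n, ∀ i i', i < i' → i' < n → a i j ≠ 0 → a i' j ≠ 0 →
      (∀ i'', i < i'' → i'' < i' → a i'' j = 0) → a i j = - a i' j)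
    (i : ℕ) (hi : i < n) :
    ((Finset.range n).filter (fun m => ∑ i' ∈ Finset.range (i+1), a i' m = 1)).card = i + 1 := by
  have sum1 : ∑ m ∈ Finset.range n, ∑ i' ∈ Finset.range (i+1), a i' m = i + 1 := by
    rw [Finset.sum_comm]
    rw [Finset.sum_congr rfl (fun i' hi' => rowsum i' (by
      simp only [Finset.mem_range] at hi'; omega))]
    simp
  have sum2 : ∑ m ∈ Finset.range n, ∑ i' ∈ Finset.range (i+1), a i' m
      = (((Finset.range n).filter (fun m => ∑ i' ∈ Finset.range (i+1), a i' m = 1)).card : ℤ) := by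
    rw [← Finset.sum_boole]
    refine Finset.sum_congr rfl (fun m hm => ?_)
    simp only [Finset.mem_range] at hm
    rcases col01 n a entries colsum colalt m hm i hi with h | h <;> rw [h] <;> simp [h]
  rw [sum2] at sum1
  exact_mod_cast sum1

/-- every entry of the monotone triangle row is the cast of a column position with prefix sum 1 -/
lemma mem_range_p
    (entries : ∀ i j, i < n → j < n → a i j = -1 ∨ a i j = 0 ∨ a i j = 1)
    (rowsum : ∀ i < n, ∑ j ∈ Finset.range n, a i j = 1)
    (colsum : ∀ j < n, ∑ i ∈ Finset.range n, a i j = 1)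
    (colalt : ∀ j < n, ∀ i i', i < i' → i' < n → a i j ≠ 0 → a i' j ≠ 0 →
      (∀ i'', i < i'' → i'' < i' → a i'' j = 0) → a i j = - a i' j)
    (hmono : ∀ i < n, ∀ j j', j < j' → j' ≤ i → b i j - (j : ℤ) < b i j' - (j' : ℤ))
    (hmem : ∀ i < n, ∀ m < n,
      ((∑ i' ∈ Finset.range (i + 1), a i' m) = 1 ↔ ∃ j ≤ i, b i j - (j : ℤ) = (m : ℤ)))
    (i : ℕ) (hi : i < n) :
    ∀ j ≤ i, ∃ m, m < n ∧ ((m : ℤ) = b i j - j) ∧ (∑ i' ∈ Finset.range (i+1), a i' m = 1) := by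
  classical
  set M := (Finset.range n).filter (fun m => ∑ i' ∈ Finset.range (i+1), a i' m = 1) with hM
  have hinj : Set.InjOn (fun j => b i j - (j:ℤ)) (Finset.range (i+1)) := by
    intro x hx y hy hxy
    simp only [Finset.coe_range, Set.mem_Iio] at hx hy
    by_contra hne
    rcases Nat.lt_or_ge x y with h' | h'
    · exact absurd hxy (ne_of_lt (hmono i hi x y h' (by omega)))
    · rcases Nat.lt_or_ge y x with h'' | h''
      · exact absurd hxy.symm (ne_of_lt (hmono i hi y x h'' (by omega)))
      · omega
  have hcardI : ((Finset.range (i+1)).image (fun j => b i j - (j:ℤ))).card = i + 1 := by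
    rw [Finset.card_image_of_injOn hinj, Finset.card_range]
  have hcardM' : (M.image (fun m : ℕ => (m:ℤ))).card = i + 1 := by
    rw [Finset.card_image_of_injOn (fun x _ y _ h => by exact_mod_cast h)]
    exact cardM n a entries rowsum colsum colalt i hi
  have hsub : M.image (fun m : ℕ => (m:ℤ)) ⊆ (Finset.range (i+1)).image (fun j => b i j - (j:ℤ)) := by
    intro x hx
    simp only [Finset.mem_image, hM, Finset.mem_filter, Finset.mem_range] at hx ⊢
    obtain ⟨m, ⟨hmn, hm1⟩, rfl⟩ := hx
    obtain ⟨j, hj, hjm⟩ := (hmem i hi m hmn).mp hm1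
    exact ⟨j, by omega, hjm⟩
  have heq := Finset.eq_of_subset_of_card_le hsub (by omega)
  intro j hj
  have : b i j - (j:ℤ) ∈ M.image (fun m : ℕ => (m:ℤ)) := by
    rw [heq]
    exact Finset.mem_image.mpr ⟨j, Finset.mem_range.mpr (by omega), rfl⟩
  obtain ⟨m, hmM, hm⟩ := Finset.mem_image.mp this
  simp only [hM, Finset.mem_filter, Finset.mem_range] at hmM
  exact ⟨m, hmM.1, hm, hmM.2⟩


/-- row prefix sums are 0 or 1 -/
lemma row01
    (entries : ∀ i j, i < n → j < n → a i j = -1 ∨ a i j = 0 ∨ a i j = 1)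
    (rowsum : ∀ i < n, ∑ j ∈ Finset.range n, a i j = 1)
    (rowalt : ∀ i < n, ∀ j j', j < j' → j' < n → a i j ≠ 0 → a i j' ≠ 0 →
      (∀ j'', j < j'' → j'' < j' → a i j'' = 0) → a i j = - a i j')
    (i : ℕ) (hi : i < n) (m : ℕ) (hm : m < n) :
    ∑ j' ∈ Finset.range (m+1), a i j' = 0 ∨ ∑ j' ∈ Finset.range (m+1), a i j' = 1 :=
  alt_prefix01 n (fun j' => a i j') (fun k hk => entries i k hi hk) (rowsum i hi)
    (rowalt i hi) m hm

/-- prefix sums of column prefix sums count triangle entries -/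
lemma countp
    (entries : ∀ i j, i < n → j < n → a i j = -1 ∨ a i j = 0 ∨ a i j = 1)
    (rowsum : ∀ i < n, ∑ j ∈ Finset.range n, a i j = 1)
    (colsum : ∀ j < n, ∑ i ∈ Finset.range n, a i j = 1)
    (colalt : ∀ j < n, ∀ i i', i < i' → i' < n → a i j ≠ 0 → a i' j ≠ 0 →
      (∀ i'', i < i'' → i'' < i' → a i'' j = 0) → a i j = - a i' j)
    (hmono : ∀ i < n, ∀ j j', j < j' → j' ≤ i → b i j - (j : ℤ) < b i j' - (j' : ℤ))
    (hmem : ∀ i < n, ∀ m < n,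
      ((∑ i' ∈ Finset.range (i + 1), a i' m) = 1 ↔ ∃ j ≤ i, b i j - (j : ℤ) = (m : ℤ)))
    (hrng : ∀ i < n, ∀ j ≤ i, ∃ m, m < n ∧ ((m : ℤ) = b i j - j) ∧
      (∑ i' ∈ Finset.range (i+1), a i' m = 1))
    (i : ℕ) (hi : i < n) (m : ℕ) (hm : m < n) :
    ∑ m' ∈ Finset.range (m+1), ∑ i' ∈ Finset.range (i+1), a i' m'
      = (((Finset.range (i+1)).filter (fun j => b i j - (j:ℤ) ≤ (m:ℤ))).card : ℤ) := by
  classical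
  set A := (Finset.range (m+1)).filter (fun m' => ∑ i' ∈ Finset.range (i+1), a i' m' = 1) with hA
  have h1 : ∑ m' ∈ Finset.range (m+1), ∑ i' ∈ Finset.range (i+1), a i' m' = (A.card : ℤ) := by
    rw [hA, ← Finset.sum_boole]
    refine Finset.sum_congr rfl (fun m' hm' => ?_)
    simp only [Finset.mem_range] at hm'
    rcases col01 n a entries colsum colalt m' (by omega) i hi with h | h <;> rw [h] <;> simp [h]
  rw [h1]
  norm_cast
  set B := (Finset.range (i+1)).filter (fun j => b i j - (j:ℤ) ≤ (m:ℤ)) with hB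
  have hinjA : Set.InjOn (fun m' : ℕ => (m':ℤ)) A := fun x _ y _ h => by simpa using h
  have hinjB : Set.InjOn (fun j => b i j - (j:ℤ)) B := by
    intro x hx y hy hxy
    simp only [hB, Finset.mem_coe, Finset.mem_filter, Finset.mem_range] at hx hy
    by_contra hne
    rcases Nat.lt_or_ge x y with h' | h'
    · exact absurd hxy (ne_of_lt (hmono i hi x y h' (by omega)))
    · rcases Nat.lt_or_ge y x with h'' | h''
      · exact absurd hxy.symm (ne_of_lt (hmono i hi y x h'' (by omega)))
      · omega
  have himg : A.image (fun m' : ℕ => (m':ℤ)) = B.image (fun j => b i j - (j:ℤ)) := by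
    ext x
    simp only [Finset.mem_image, hA, hB, Finset.mem_filter, Finset.mem_range]
    constructor
    · rintro ⟨m', ⟨hm'1, hm'2⟩, rfl⟩
      obtain ⟨j, hj, hjm⟩ := (hmem i hi m' (by omega)).mp hm'2
      exact ⟨j, ⟨by omega, by rw [hjm]; exact_mod_cast by omega⟩, hjm⟩
    · rintro ⟨j, ⟨hj1, hj2⟩, rfl⟩
      obtain ⟨m', hm'n, hm'e, hm's⟩ := hrng i hi j (by omega)
      exact ⟨m', ⟨by rw [← hm'e] at hj2; omega, hm's⟩, hm'e⟩
  calc A.card = (A.image (fun m' : ℕ => (m':ℤ))).card := (Finset.card_image_of_injOn hinjA).symm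
    _ = (B.image (fun j => b i j - (j:ℤ))).card := by rw [himg]
    _ = B.card := Finset.card_image_of_injOn hinjB

lemma row_identity
    (col01 : ∀ m < n, ∀ i < n,
      ∑ i' ∈ Finset.range (i+1), a i' m = 0 ∨ ∑ i' ∈ Finset.range (i+1), a i' m = 1)
    (row01 : ∀ i < n, ∀ m < n,
      ∑ j' ∈ Finset.range (m+1), a i j' = 0 ∨ ∑ j' ∈ Finset.range (m+1), a i j' = 1)
    (countp : ∀ i < n, ∀ m < n,
      ∑ m' ∈ Finset.range (m+1), ∑ i' ∈ Finset.range (i+1), a i' m'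
        = (((Finset.range (i+1)).filter (fun j => b i j - (j:ℤ) ≤ (m:ℤ))).card : ℤ))
    (hrng : ∀ i < n, ∀ j ≤ i, ∃ m, m < n ∧ ((m : ℤ) = b i j - j) ∧
      (∑ i' ∈ Finset.range (i+1), a i' m = 1))
    (hmono : ∀ i < n, ∀ j j', j < j' → j' ≤ i → b i j - (j : ℤ) < b i j' - (j' : ℤ))
    (hmem : ∀ i < n, ∀ m < n,
      ((∑ i' ∈ Finset.range (i + 1), a i' m) = 1 ↔ ∃ j ≤ i, b i j - (j : ℤ) = (m : ℤ)))
    (i : ℕ) (hi1 : i + 1 < n) :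
    ∑ m ∈ Finset.range n, (∑ i' ∈ Finset.range (i+1), a i' m) *
        (∑ j' ∈ Finset.range (m+1), a (i+1) j')
      = (((Finset.range n).filter (fun j => j ≤ i ∧ b (i+1) j ≤ b i j ∧
          b i j = b (i+1) (j+1) - 1)).card : ℤ) := by
  classical
  have hi : i < n := by omega
  set P : ℕ → ℤ := fun j => b i j - j with hP
  set Q : ℕ → ℤ := fun j => b (i+1) j - j with hQ
  have hmonoP : ∀ j j', j < j' → j' < i+1 → P j < P j' :=
    fun j j' h1 h2 => hmono i hi j j' h1 (by omega)
  have hmonoQ : ∀ j j', j < j' → j' < i+2 → Q j < Q j' :=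
    fun j j' h1 h2 => hmono (i+1) hi1 j j' h1 (by omega)
  set Cp : ℤ → ℕ := fun m => ((Finset.range (i+1)).filter (fun j => P j ≤ m)).card with hCp
  set Cq : ℤ → ℕ := fun m => ((Finset.range (i+2)).filter (fun j => Q j ≤ m)).card with hCq
  set r : ℕ → ℤ := fun m => ∑ j' ∈ Finset.range (m+1), a (i+1) j' with hr
  have cip : ∀ j < i+1, ∀ m : ℤ, (j + 1 ≤ Cp m ↔ P j ≤ m) :=
    fun j hj m => count_iff (i+1) P hmonoP j hj m
  have ciq : ∀ j < i+2, ∀ m : ℤ, (j + 1 ≤ Cq m ↔ Q j ≤ m) :=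
    fun j hj m => count_iff (i+2) Q hmonoQ j hj m
  -- r m = Cq m - Cp m
  have hrCC : ∀ m < n, r m = (Cq (m:ℤ) : ℤ) - (Cp (m:ℤ) : ℤ) := by
    intro m hm
    have e1 := countp i hi m hm
    have e2 := countp (i+1) hi1 m hm
    have e3 : ∑ m' ∈ Finset.range (m+1), ∑ i' ∈ Finset.range (i+2), a i' m'
        - ∑ m' ∈ Finset.range (m+1), ∑ i' ∈ Finset.range (i+1), a i' m' = r m := by
      rw [← Finset.sum_sub_distrib]
      refine Finset.sum_congr rfl (fun m' _ => ?_)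
      rw [Finset.sum_range_succ]
      ring
    rw [← e3, e1, e2]
  -- Cp (P j) = j + 1 when P j = m
  have hCpval : ∀ m < n, ∀ j ≤ i, P j = (m:ℤ) → Cp (m:ℤ) = j + 1 := by
    intro m hm j hj hPj
    have hge : j + 1 ≤ Cp (m:ℤ) := (cip j (by omega) (m:ℤ)).mpr (le_of_eq hPj)
    have hle : Cp (m:ℤ) ≤ j + 1 := by
      rcases eq_or_lt_of_le hj with h' | h'
      · subst h'
        calc Cp (m:ℤ) ≤ (Finset.range (j+1)).card := Finset.card_filter_le _ _
          _ = j + 1 := Finset.card_range _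
      · by_contra hc
        push_neg at hc
        have : P (j+1) ≤ (m:ℤ) := (cip (j+1) (by omega) (m:ℤ)).mp (by omega)
        have := hmonoP j (j+1) (by omega) (by omega)
        omega
    omega
  -- the key equivalence
  have key : ∀ m < n, ∀ j ≤ i, P j = (m:ℤ) →
      (r m = 1 ↔ (Q j ≤ P j ∧ P j = Q (j+1))) := by
    intro m hm j hj hPj
    have hCpm := hCpval m hm j hj hPj
    have hrm := hrCC m hm
    constructor
    · intro hr1
      have hCqm : Cq (m:ℤ) = j + 2 := by omega
      have hq1 : Q (j+1) ≤ (m:ℤ) :=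
        (ciq (j+1) (by omega) (m:ℤ)).mp (by omega)
      have hple : (m:ℤ) ≤ Q (j+1) := by
        by_contra hc
        push_neg at hc
        rcases Nat.eq_zero_or_pos m with h0 | h0
        · obtain ⟨m'', _, hm''e, _⟩ := hrng (i+1) hi1 (j+1) (by omega)
          have hm''Q : (m'':ℤ) = Q (j+1) := by
            rw [hQ]; push_cast at hm''e ⊢; omega
          omega
        · set m₀ := m - 1 with hm₀
          have hm₀n : m₀ < n := by omega
          have hcast : (m₀:ℤ) = (m:ℤ) - 1 := by omega
          have hCp0 : Cp (m₀:ℤ) ≤ j := by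
            by_contra hc2
            push_neg at hc2
            have : P j ≤ (m₀:ℤ) :=
              (cip j (by omega) (m₀:ℤ)).mp (by omega)
            omega
          have hr0 := hrCC m₀ hm₀n
          have hr01' : r m₀ = 0 ∨ r m₀ = 1 := row01 (i+1) hi1 m₀ hm₀n
          have hCq0 : j + 2 ≤ Cq (m₀:ℤ) :=
            (ciq (j+1) (by omega) (m₀:ℤ)).mpr (by omega)
          omega
      have hPQ : P j = Q (j+1) := by omega
      refine ⟨?_, hPQ⟩
      have := hmonoQ j (j+1) (by omega) (by omega)
      omega
    · rintro ⟨hq, hpq⟩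
      have hge : j + 2 ≤ Cq (m:ℤ) :=
        (ciq (j+1) (by omega) (m:ℤ)).mpr (by omega)
      have hr01' : r m = 0 ∨ r m = 1 := row01 (i+1) hi1 m hm
      omega
  -- LHS as a card
  set L := (Finset.range n).filter
    (fun m => (∑ i' ∈ Finset.range (i+1), a i' m) = 1 ∧ r m = 1) with hL
  have hLcard : ∑ m ∈ Finset.range n, (∑ i' ∈ Finset.range (i+1), a i' m) * r m
      = (L.card : ℤ) := by
    rw [hL, ← Finset.sum_boole]
    refine Finset.sum_congr rfl (fun m hm => ?_)
    simp only [Finset.mem_range] at hm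
    rcases col01 m hm i hi with h | h
    · rw [h]
      simp only [zero_mul]
      rw [if_neg]
      rintro ⟨h1, -⟩
      omega
    · have h'' : r m = 0 ∨ r m = 1 := row01 (i+1) hi1 m hm
      rcases h'' with h' | h'
      · rw [h, h']
        simp only [mul_zero]
        rw [if_neg]
        rintro ⟨-, h2⟩
        omega
      · simp [h, h']
  rw [hLcard]
  norm_cast
  -- RHS set
  set R := (Finset.range n).filter (fun j => j ≤ i ∧ b (i+1) j ≤ b i j ∧
      b i j = b (i+1) (j+1) - 1) with hR
  -- translate R's condition
  have hRmem : ∀ j, j ∈ R ↔ (j ≤ i ∧ Q j ≤ P j ∧ P j = Q (j+1)) := by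
    intro j
    simp only [hR, Finset.mem_filter, Finset.mem_range, hP, hQ]
    constructor
    · rintro ⟨-, h1, h2, h3⟩
      refine ⟨h1, ?_, ?_⟩ <;> push_cast <;> omega
    · rintro ⟨h1, h2, h3⟩
      refine ⟨by omega, h1, ?_, ?_⟩ <;> push_cast at h2 h3 <;> omega
  have hinjL : Set.InjOn (fun m' : ℕ => (m':ℤ)) L := fun x _ y _ h => by simpa using h
  have hinjR : Set.InjOn P R := by
    intro x hx y hy hxy
    have hx' := (hRmem x).mp (Finset.mem_coe.mp hx)
    have hy' := (hRmem y).mp (Finset.mem_coe.mp hy)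
    by_contra hne
    rcases Nat.lt_or_ge x y with h' | h'
    · exact absurd hxy (ne_of_lt (hmonoP x y h' (by omega)))
    · rcases Nat.lt_or_ge y x with h'' | h''
      · exact absurd hxy.symm (ne_of_lt (hmonoP y x h'' (by omega)))
      · omega
  have himg : L.image (fun m' : ℕ => (m':ℤ)) = R.image P := by
    ext x
    simp only [Finset.mem_image]
    constructor
    · rintro ⟨m, hmL, rfl⟩
      rw [hL, Finset.mem_filter, Finset.mem_range] at hmL
      obtain ⟨hmn, hc1, hr1⟩ := hmL
      obtain ⟨j, hj, hjm⟩ := (hmem i hi m hmn).mp hc1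
      have hk := (key m hmn j hj hjm).mp hr1
      exact ⟨j, (hRmem j).mpr ⟨hj, hk⟩, hjm⟩
    · rintro ⟨j, hjR, rfl⟩
      rw [hRmem] at hjR
      obtain ⟨hj, hq, hpq⟩ := hjR
      obtain ⟨m, hmn, hme, hms⟩ := hrng i hi j hj
      have hr1 : r m = 1 := (key m hmn j hj hme.symm).mpr ⟨hq, hpq⟩
      exact ⟨m, by rw [hL, Finset.mem_filter, Finset.mem_range]; exact ⟨hmn, hms, hr1⟩, hme⟩
  calc L.card = (L.image (fun m' : ℕ => (m':ℤ))).card := (Finset.card_image_of_injOn hinjL).symm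
    _ = (R.image P).card := by rw [himg]
    _ = R.card := Finset.card_image_of_injOn hinjR

end

/-- Let `a` be an `n × n` alternating sign matrix (entries in `{−1,0,1}`, each row and
column sums to `1`, and the nonzero entries of each row and column alternate in sign),
and let `b` be the corresponding monotone triangle: `b i j − j` is the `j`-th column
(in increasing order) in which the partial column sum `∑_{i' ≤ i} a i' ·` equals `1`
(the shift by `j` makes rows strictly increasing with gaps, in the half-open-interval
convention).  Then the generalized inversion number of `a`,
`∑_{i < i', j' ≤ j} a_{ij} a_{i'j'}`, equals that of `b`,
`#{(i,j) : b_{i+1,j} ≤ b_{ij} = b_{i+1,j+1} − 1}`. -/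
theorem asm_mt_inversion (n : ℕ) (a : ℕ → ℕ → ℤ) (b : ℕ → ℕ → ℤ)
    (entries : ∀ i j, i < n → j < n → a i j = -1 ∨ a i j = 0 ∨ a i j = 1)
    (rowsum : ∀ i < n, ∑ j ∈ Finset.range n, a i j = 1)
    (colsum : ∀ j < n, ∑ i ∈ Finset.range n, a i j = 1)
    (rowalt : ∀ i < n, ∀ j j', j < j' → j' < n → a i j ≠ 0 → a i j' ≠ 0 →
      (∀ j'', j < j'' → j'' < j' → a i j'' = 0) → a i j = - a i j')
    (colalt : ∀ j < n, ∀ i i', i < i' → i' < n → a i j ≠ 0 → a i' j ≠ 0 →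
      (∀ i'', i < i'' → i'' < i' → a i'' j = 0) → a i j = - a i' j)
    (hmono : ∀ i < n, ∀ j j', j < j' → j' ≤ i → b i j - (j : ℤ) < b i j' - (j' : ℤ))
    (hmem : ∀ i < n, ∀ m < n,
      ((∑ i' ∈ Finset.range (i + 1), a i' m) = 1 ↔ ∃ j ≤ i, b i j - (j : ℤ) = (m : ℤ))) :
    (∑ i ∈ Finset.range n, ∑ i' ∈ Finset.range n,
      ∑ j ∈ Finset.range n, ∑ j' ∈ Finset.range n,
        if i < i' ∧ j' ≤ j then a i j * a i' j' else 0)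
    = (((Finset.range (n - 1) ×ˢ Finset.range n).filter
        (fun p => p.2 ≤ p.1 ∧ b (p.1 + 1) p.2 ≤ b p.1 p.2 ∧
          b p.1 p.2 = b (p.1 + 1) (p.2 + 1) - 1)).card : ℤ) := by
  classical
  rcases Nat.eq_zero_or_pos n with rfl | hn
  · simp
  obtain ⟨N, rfl⟩ : ∃ N, n = N + 1 := ⟨n - 1, by omega⟩
  set n := N + 1 with hn'
  have hrng := mem_range_p n a b entries rowsum colsum colalt hmono hmem
  have col01' : ∀ m < n, ∀ i < n,
      ∑ i' ∈ Finset.range (i+1), a i' m = 0 ∨ ∑ i' ∈ Finset.range (i+1), a i' m = 1 :=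
    fun m hm i hi => col01 n a entries colsum colalt m hm i hi
  have row01' : ∀ i < n, ∀ m < n,
      ∑ j' ∈ Finset.range (m+1), a i j' = 0 ∨ ∑ j' ∈ Finset.range (m+1), a i j' = 1 :=
    fun i hi m hm => row01 n a entries rowsum rowalt i hi m hm
  have countp' := countp n a b entries rowsum colsum colalt hmono hmem hrng
  have rearr : ∀ i' < n, ∀ j < n,
      (∑ i ∈ Finset.range n, ∑ j' ∈ Finset.range n,
        if i < i' ∧ j' ≤ j then a i j * a i' j' else 0)
      = (∑ i ∈ Finset.range i', a i j) * (∑ j' ∈ Finset.range (j+1), a i' j') := by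
    intro i' hi' j hj
    have hfil : (Finset.range n).filter (fun j' => j' ≤ j) = Finset.range (j+1) := by
      ext x
      simp only [Finset.mem_filter, Finset.mem_range, Nat.lt_succ_iff]
      omega
    have step1 : ∀ i, (∑ j' ∈ Finset.range n,
        if i < i' ∧ j' ≤ j then a i j * a i' j' else 0)
        = if i < i' then a i j * ∑ j' ∈ Finset.range (j+1), a i' j' else 0 := by
      intro i
      by_cases hii : i < i'
      · simp only [hii, true_and, if_true]
        rw [← Finset.sum_filter, hfil, ← Finset.mul_sum]
      · simp [hii]
    rw [Finset.sum_congr rfl (fun i _ => step1 i)]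
    have hfil2 : (Finset.range n).filter (fun i => i < i') = Finset.range i' := by
      ext x
      simp only [Finset.mem_filter, Finset.mem_range]
      omega
    rw [← Finset.sum_filter, hfil2, ← Finset.sum_mul]
  calc
    (∑ i ∈ Finset.range n, ∑ i' ∈ Finset.range n,
      ∑ j ∈ Finset.range n, ∑ j' ∈ Finset.range n,
        if i < i' ∧ j' ≤ j then a i j * a i' j' else 0)
      = ∑ i' ∈ Finset.range n, ∑ i ∈ Finset.range n,
          ∑ j ∈ Finset.range n, ∑ j' ∈ Finset.range n,
            if i < i' ∧ j' ≤ j then a i j * a i' j' else 0 := Finset.sum_comm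
    _ = ∑ i' ∈ Finset.range n, ∑ j ∈ Finset.range n,
          ∑ i ∈ Finset.range n, ∑ j' ∈ Finset.range n,
            if i < i' ∧ j' ≤ j then a i j * a i' j' else 0 :=
        Finset.sum_congr rfl (fun i' _ => Finset.sum_comm)
    _ = ∑ i' ∈ Finset.range n, ∑ j ∈ Finset.range n,
          (∑ i ∈ Finset.range i', a i j) * (∑ j' ∈ Finset.range (j+1), a i' j') := by
        refine Finset.sum_congr rfl (fun i' hi' => Finset.sum_congr rfl (fun j hj => ?_))
        exact rearr i' (Finset.mem_range.mp hi') j (Finset.mem_range.mp hj)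
    _ = ∑ k ∈ Finset.range N,
          ∑ j ∈ Finset.range n,
            (∑ i ∈ Finset.range (k+1), a i j) * (∑ j' ∈ Finset.range (j+1), a (k+1) j') := by
        rw [Finset.sum_range_succ']
        simp
    _ = ∑ k ∈ Finset.range N,
          (((Finset.range n).filter (fun j => j ≤ k ∧ b (k+1) j ≤ b k j ∧
            b k j = b (k+1) (j+1) - 1)).card : ℤ) := by
        refine Finset.sum_congr rfl (fun k hk => ?_)
        exact row_identity n a b col01' row01' countp' hrng hmono hmem k (by have := Finset.mem_range.mp hk; omega)
    _ = (((Finset.range (n - 1) ×ˢ Finset.range n).filter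
        (fun p => p.2 ≤ p.1 ∧ b (p.1 + 1) p.2 ≤ b p.1 p.2 ∧
          b p.1 p.2 = b (p.1 + 1) (p.2 + 1) - 1)).card : ℤ) := by
        have hN : n - 1 = N := by omega
        rw [hN, Finset.card_filter, Finset.sum_product]
        push_cast
        refine Finset.sum_congr rfl (fun k hk => ?_)
        rw [Finset.card_filter]
        push_cast
        rfl
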